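/- arXiv:2308.12576 — 4 statements merged into one kernel-verified Lean document; each statement's English description precedes it below -/
import Mathlib

section
/- Theorem 1: Every strongly consistently connected system of random variables satisfies counterfactual definiteness; that is, for every choice of factual context c0, the factual–counterfactual subsystem with respect to c0 is noncontextual. -/
open Finset

/-- A probability distribution on a finite type, given by a real-valued mass function:
nonnegative and summing to one. -/
def IsDist {α : Type} [Fintype α] (d : α → ℝ) : Prop :=
  (∀ a, 0 ≤ d a) ∧ ∑ a, d a = 1

/-- The pushforward (marginal) of a mass function along a map. -/
def margin {α β : Type} [Fintype α] [DecidableEq β] (d : α → ℝ) (f : α → β) : β → ℝ :=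
  fun b => ∑ a ∈ univ.filter (fun a => f a = b), d a

/-- **Theorem 1.** Any strongly consistently connected system of random variables, given by
contents `Q`, contexts `C`, a measurement relation `mea` and, for each context `c`,
a joint distribution `μ c` on the product of the value sets of the contents measured in `c`,
satisfies counterfactual definiteness: for every choice of a factual context `c0`, the
factual–counterfactual subsystem with respect to `c0` (contents `{q // mea q c0}`, and in
each context `c` the marginal of `μ c` on the contents measured both in `c` and in `c0`)
is noncontextual, i.e., admits a reduced coupling `S`. -/
theorem scc_system_satisfies_CFD
    {Q C : Type} [Fintype Q] [DecidableEq Q] [Fintype C]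
    (mea : Q → C → Bool) (V : Q → Type) [∀ q, Fintype (V q)] [∀ q, DecidableEq (V q)]
    (μ : ∀ c : C, (∀ q : {q : Q // mea q c}, V q.1) → ℝ)
    (hdist : ∀ c, IsDist (μ c))
    (hscc : ∀ (Q' : Finset Q) (c c' : C)
        (h : ∀ q ∈ Q', mea q c) (h' : ∀ q ∈ Q', mea q c'),
        margin (μ c) (fun x (q : {q : Q // q ∈ Q'}) => x ⟨q.1, h q.1 q.2⟩)
          = margin (μ c') (fun x (q : {q : Q // q ∈ Q'}) => x ⟨q.1, h' q.1 q.2⟩)) :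
    ∀ c0 : C, ∃ S : (∀ q : {q : Q // mea q c0}, V q.1) → ℝ,
      IsDist S ∧
      ∀ c : C,
        margin S (fun x (q : {q : Q // mea q c0 ∧ mea q c}) => x ⟨q.1, q.2.1⟩)
          = margin (μ c) (fun x (q : {q : Q // mea q c0 ∧ mea q c}) => x ⟨q.1, q.2.2⟩) := by
  classical
  intro c0
  refine ⟨μ c0, hdist c0, ?_⟩
  intro c
  set Q' : Finset Q := univ.filter (fun q => mea q c0 ∧ mea q c) with hQ'
  have h0 : ∀ q ∈ Q', mea q c0 := by intro q hq; simp [hQ'] at hq; exact hq.1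
  have h1 : ∀ q ∈ Q', mea q c := by intro q hq; simp [hQ'] at hq; exact hq.2
  have hmem : ∀ q : Q, mea q c0 ∧ mea q c → q ∈ Q' := by
    intro q hq; simp [hQ', hq.1, hq.2]
  have hprop : ∀ q : {q : Q // q ∈ Q'}, mea q.1 c0 ∧ mea q.1 c := fun q => by
    simpa [hQ'] using (Finset.mem_filter.mp q.2).2
  have key := hscc Q' c0 c h0 h1
  funext y
  have hkey := congrFun key (fun q : {q : Q // q ∈ Q'} =>
    y ⟨q.1, ⟨(hprop q).1, (hprop q).2⟩⟩)
  unfold margin at hkey ⊢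
  have e1 : (univ.filter (fun x : (∀ q : {q : Q // mea q c0}, V q.1) =>
      (fun (q : {q : Q // mea q c0 ∧ mea q c}) => x ⟨q.1, q.2.1⟩) = y)) =
      (univ.filter (fun x : (∀ q : {q : Q // mea q c0}, V q.1) =>
      (fun (q : {q : Q // q ∈ Q'}) => x ⟨q.1, h0 q.1 q.2⟩) =
      (fun q : {q : Q // q ∈ Q'} =>
        y ⟨q.1, ⟨(hprop q).1, (hprop q).2⟩⟩))) := by
    ext x
    simp only [mem_filter, mem_univ, true_and, funext_iff, Subtype.forall]
    constructor
    · intro h q hq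
      exact h q ⟨h0 q hq, h1 q hq⟩
    · intro h q hq
      exact h q (hmem q hq)
  have e2 : (univ.filter (fun x : (∀ q : {q : Q // mea q c}, V q.1) =>
      (fun (q : {q : Q // mea q c0 ∧ mea q c}) => x ⟨q.1, q.2.2⟩) = y)) =
      (univ.filter (fun x : (∀ q : {q : Q // mea q c}, V q.1) =>
      (fun (q : {q : Q // q ∈ Q'}) => x ⟨q.1, h1 q.1 q.2⟩) =
      (fun q : {q : Q // q ∈ Q'} =>
        y ⟨q.1, ⟨(hprop q).1, (hprop q).2⟩⟩))) := by
    ext x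
    simp only [mem_filter, mem_univ, true_and, funext_iff, Subtype.forall]
    constructor
    · intro h q hq
      exact h q ⟨h0 q hq, h1 q hq⟩
    · intro h q hq
      exact h q (hmem q hq)
  rw [e1, e2]
  exact hkey
end

section
/- For any strongly consistently connected system and any factual context c0, the factual distribution μ_{c0} is a reduced coupling of the F-CF subsystem with respect to c0, and the F-CF subsystem admits an identically connected coupling: there exists a probability measure γ on Π_{(q,c) : q ≺ c and q ≺ c0} V_q such that (1) for every context c, the marginal of γ on the coordinates {(q,c) : q ≺ c and q ≺ c0} equals the marginal of μ_c on the coordinates {q : q ≺ c and q ≺ c0}, and (2) γ-almost surely the (q,c)-coordinate equals the (q,c0)-coordinate for every q with q ≺ c and q ≺ c0. -/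
open Finset

lemma isDist_margin {α β : Type} [Fintype α] [Fintype β] [DecidableEq β]
    (d : α → ℝ) (hd : IsDist d) (f : α → β) : IsDist (margin d f) := by
  constructor
  · intro b; exact Finset.sum_nonneg fun a _ => hd.1 a
  · unfold margin
    rw [Finset.sum_fiberwise_eq_sum_filter univ univ f d]
    simpa using hd.2

lemma margin_margin {α β γ : Type} [Fintype α] [Fintype β] [DecidableEq β] [DecidableEq γ]
    (d : α → ℝ) (f : α → β) (g : β → γ) :
    margin (margin d f) g = margin d (g ∘ f) := by
  funext c
  unfold margin
  rw [Finset.sum_fiberwise_eq_sum_filter univ (univ.filter (fun b => g b = c)) f d]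
  congr 1
  ext a
  simp

lemma margin_eq_of_iff {α β γ : Type} [Fintype α] [DecidableEq β] [DecidableEq γ]
    (d : α → ℝ) (f : α → β) (g : α → γ) (T : β → γ)
    (h : ∀ a b, f a = b ↔ g a = T b) (b : β) :
    margin d f b = margin d g (T b) := by
  unfold margin
  congr 1
  ext a
  simp [h a b]
/-- For any strongly consistently connected system `(μ c)_{c ∈ C}` and any factual context
`c0`: (1) the factual distribution `μ c0` is a reduced coupling of the
factual–counterfactual subsystem with respect to `c0`, i.e., for every context `c` the
marginal of `μ c0` on the contents measured both in `c` and `c0` equals the corresponding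
marginal of `μ c`; and (2) the F-CF subsystem admits an identically connected coupling:
a probability measure `γ` on the product over all pairs `(q, c)` with `q ≺ c` and `q ≺ c0`
of `V q`, whose marginal on the coordinates of each context `c` equals the marginal of
`μ c` on `{q : q ≺ c, q ≺ c0}`, and which almost surely makes the `(q, c)`-coordinate
equal to the `(q, c0)`-coordinate. -/
theorem scc_factual_reduced_coupling_and_ic_coupling
    {Q C : Type} [Fintype Q] [DecidableEq Q] [Fintype C] [DecidableEq C]
    (mea : Q → C → Bool) (V : Q → Type) [∀ q, Fintype (V q)] [∀ q, DecidableEq (V q)]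
    (μ : ∀ c : C, (∀ q : {q : Q // mea q c}, V q.1) → ℝ)
    (hdist : ∀ c, IsDist (μ c))
    (hscc : ∀ (Q' : Finset Q) (c c' : C)
        (h : ∀ q ∈ Q', mea q c) (h' : ∀ q ∈ Q', mea q c'),
        margin (μ c) (fun x (q : {q : Q // q ∈ Q'}) => x ⟨q.1, h q.1 q.2⟩)
          = margin (μ c') (fun x (q : {q : Q // q ∈ Q'}) => x ⟨q.1, h' q.1 q.2⟩))
    (c0 : C) :
    (∀ c : C,
        margin (μ c0) (fun x (q : {q : Q // mea q c ∧ mea q c0}) => x ⟨q.1, q.2.2⟩)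
          = margin (μ c) (fun x (q : {q : Q // mea q c ∧ mea q c0}) => x ⟨q.1, q.2.1⟩))
    ∧ ∃ γ : (∀ p : {p : Q × C // mea p.1 p.2 ∧ mea p.1 c0}, V p.1.1) → ℝ,
        IsDist γ ∧
        (∀ c : C,
          margin γ (fun x (q : {q : Q // mea q c ∧ mea q c0}) => x ⟨(q.1, c), q.2⟩)
            = margin (μ c) (fun x (q : {q : Q // mea q c ∧ mea q c0}) => x ⟨q.1, q.2.1⟩)) ∧
        (∀ x, γ x ≠ 0 → ∀ (q : Q) (c : C) (h : mea q c) (h0 : mea q c0),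
          x ⟨(q, c), ⟨h, h0⟩⟩ = x ⟨(q, c0), ⟨h0, h0⟩⟩) := by
  classical
  have key : ∀ c : C,
      margin (μ c0) (fun x (q : {q : Q // mea q c ∧ mea q c0}) => x ⟨q.1, q.2.2⟩)
        = margin (μ c) (fun x (q : {q : Q // mea q c ∧ mea q c0}) => x ⟨q.1, q.2.1⟩) := by
    intro c
    set Q' : Finset Q := univ.filter (fun q => mea q c ∧ mea q c0) with hQ'
    have hmem : ∀ q, q ∈ Q' ↔ (mea q c ∧ mea q c0) := by
      intro q; simp [hQ']
    have h0 : ∀ q ∈ Q', mea q c0 := fun q hq => ((hmem q).mp hq).2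
    have hc : ∀ q ∈ Q', mea q c = true := fun q hq => ((hmem q).mp hq).1
    have H := hscc Q' c0 c h0 hc
    funext b
    set T : (∀ q : {q : Q // mea q c ∧ mea q c0}, V q.1) →
        (∀ q' : {q : Q // q ∈ Q'}, V q'.1) :=
      fun b q' => b ⟨q'.1, (hmem q'.1).mp q'.2⟩ with hT
    have iff0 : ∀ (x : (∀ q : {q : Q // mea q c0}, V q.1)) b,
        (fun (q : {q : Q // mea q c ∧ mea q c0}) => x ⟨q.1, q.2.2⟩) = b ↔
        (fun (q' : {q : Q // q ∈ Q'}) => x ⟨q'.1, h0 q'.1 q'.2⟩) = T b := by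
      intro x b
      constructor
      · intro hb; funext q'
        exact congrFun hb ⟨q'.1, (hmem q'.1).mp q'.2⟩
      · intro hb; funext q
        exact congrFun hb ⟨q.1, (hmem q.1).mpr q.2⟩
    have iffc : ∀ (x : (∀ q : {q : Q // mea q c}, V q.1)) b,
        (fun (q : {q : Q // mea q c ∧ mea q c0}) => x ⟨q.1, q.2.1⟩) = b ↔
        (fun (q' : {q : Q // q ∈ Q'}) => x ⟨q'.1, hc q'.1 q'.2⟩) = T b := by
      intro x b
      constructor
      · intro hb; funext q'
        exact congrFun hb ⟨q'.1, (hmem q'.1).mp q'.2⟩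
      · intro hb; funext q
        exact congrFun hb ⟨q.1, (hmem q.1).mpr q.2⟩
    calc margin (μ c0) (fun x (q : {q : Q // mea q c ∧ mea q c0}) => x ⟨q.1, q.2.2⟩) b
        = margin (μ c0) (fun x (q' : {q : Q // q ∈ Q'}) => x ⟨q'.1, h0 q'.1 q'.2⟩) (T b) :=
          margin_eq_of_iff _ _ _ T iff0 b
      _ = margin (μ c) (fun x (q' : {q : Q // q ∈ Q'}) => x ⟨q'.1, hc q'.1 q'.2⟩) (T b) := by
          rw [H]
      _ = margin (μ c) (fun x (q : {q : Q // mea q c ∧ mea q c0}) => x ⟨q.1, q.2.1⟩) b :=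
          (margin_eq_of_iff _ _ _ T iffc b).symm
  refine ⟨key, ?_⟩
  set D : (∀ q : {q : Q // mea q c0}, V q.1) →
      (∀ p : {p : Q × C // mea p.1 p.2 ∧ mea p.1 c0}, V p.1.1) :=
    fun x p => x ⟨p.1.1, p.2.2⟩ with hD
  refine ⟨margin (μ c0) D, isDist_margin _ (hdist c0) D, ?_, ?_⟩
  · intro c
    rw [margin_margin]
    exact key c
  · intro x hx q c h hc0
    have : ∃ a ∈ univ.filter (fun a => D a = x), μ c0 a ≠ 0 :=
      Finset.exists_ne_zero_of_sum_ne_zero hx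
    obtain ⟨a, ha, -⟩ := this
    have hDa : D a = x := (Finset.mem_filter.mp ha).2
    rw [← hDa]
end

section
/- Every factual–counterfactual subsystem of the Specker magic-box system is noncontextual: for each choice of factual context c0 ∈ {1,2,3}, there exists a probability measure S on {−1,+1}^2 (indexed by the two contents measured in c0) assigning probability 1/2 to each of (+1,−1) and (−1,+1), such that for every context c, the marginal of S on the contents measured both in c and in c0 equals the corresponding marginal of context c's distribution. Hence the Specker system satisfies counterfactual definiteness despite being contextual. -/
open Finset

/-- The two-element value set `{-1, +1}`. -/
abbrev Sign : Type := ({-1, 1} : Finset ℤ)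

/-- Measurement relation of the Specker magic-box system: context `c` measures exactly
the two contents `c` and `c + 1` (so the three contexts measure the content pairs
`{1,2}`, `{2,3}`, `{3,1}`). -/
def speckerMea (q c : Fin 3) : Bool := q == c || q == c + 1

lemma speckerMea_self : ∀ c : Fin 3, speckerMea c c := by decide

lemma speckerMea_succ : ∀ c : Fin 3, speckerMea (c + 1) c := by decide

/-- The distribution in context `c` of the Specker magic-box system: the two measured
variables are `±1`-valued, perfectly anticorrelated, and uniform — probability `1/2` for
each of the outcomes `(+1, -1)` and `(-1, +1)`, and `0` for `(+1, +1)` and `(-1, -1)`. -/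
noncomputable def speckerμ (c : Fin 3)
    (x : ∀ q : {q : Fin 3 // speckerMea q c}, Sign) : ℝ :=
  if (x ⟨c, speckerMea_self c⟩ : ℤ) = -(x ⟨c + 1, speckerMea_succ c⟩ : ℤ) then 1 / 2 else 0

lemma sum_ite_half {α : Type} [Fintype α] (Q P : α → Prop) [DecidablePred Q] [DecidablePred P] :
    ∑ a ∈ univ.filter Q, (if P a then (1/2 : ℝ) else 0)
      = ((univ.filter fun a => Q a ∧ P a).card : ℝ) / 2 := by
  rw [← Finset.sum_filter, Finset.filter_filter, Finset.sum_const, nsmul_eq_mul]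
  ring

/-- Every factual–counterfactual subsystem of the Specker magic-box system is
noncontextual: for each factual context `c0` there is a probability measure `S` on
`{-1,+1}²` (indexed by the two contents measured in `c0`) assigning probability `1/2` to
each of `(+1, -1)` and `(-1, +1)`, whose marginal on the contents measured both in a
context `c` and in `c0` equals the corresponding marginal of `speckerμ c`, for every
context `c`. Hence the Specker system satisfies counterfactual definiteness despite
being contextual. -/
theorem specker_FCF_subsystems_noncontextual :
    ∀ c0 : Fin 3, ∃ S : (∀ q : {q : Fin 3 // speckerMea q c0}, Sign) → ℝ,
      IsDist S ∧
      (∀ x, S x =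
        if (x ⟨c0, speckerMea_self c0⟩ : ℤ) = -(x ⟨c0 + 1, speckerMea_succ c0⟩ : ℤ)
        then 1 / 2 else 0) ∧
      ∀ c : Fin 3,
        margin S (fun x (q : {q : Fin 3 // speckerMea q c0 ∧ speckerMea q c}) =>
            x ⟨q.1, q.2.1⟩)
          = margin (speckerμ c)
              (fun x (q : {q : Fin 3 // speckerMea q c0 ∧ speckerMea q c}) =>
                x ⟨q.1, q.2.2⟩) := by
  intro c0
  refine ⟨speckerμ c0, ⟨?_, ?_⟩, fun x => rfl, ?_⟩
  · intro a
    unfold speckerμ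
    split <;> norm_num
  · have h : ∑ a, speckerμ c0 a
        = ∑ a ∈ (univ : Finset (∀ q : {q : Fin 3 // speckerMea q c0}, Sign)).filter (fun _ => True),
            (if ((a ⟨c0, speckerMea_self c0⟩ : ℤ) = -(a ⟨c0 + 1, speckerMea_succ c0⟩ : ℤ))
              then (1/2 : ℝ) else 0) := by
      simp [speckerμ]
    rw [h, sum_ite_half]
    have hc : (univ.filter fun (a : ∀ q : {q : Fin 3 // speckerMea q c0}, Sign) =>
        True ∧ ((a ⟨c0, speckerMea_self c0⟩ : ℤ) = -(a ⟨c0 + 1, speckerMea_succ c0⟩ : ℤ))).card = 2 := by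
      fin_cases c0 <;> decide
    rw [hc]
    norm_num
  · intro c
    funext b
    have h1 : margin (speckerμ c0)
        (fun x (q : {q : Fin 3 // speckerMea q c0 ∧ speckerMea q c}) => x ⟨q.1, q.2.1⟩) b
        = ((univ.filter fun (a : ∀ q : {q : Fin 3 // speckerMea q c0}, Sign) =>
            (fun (q : {q : Fin 3 // speckerMea q c0 ∧ speckerMea q c}) => a ⟨q.1, q.2.1⟩) = b ∧
            ((a ⟨c0, speckerMea_self c0⟩ : ℤ) = -(a ⟨c0 + 1, speckerMea_succ c0⟩ : ℤ))).card : ℝ) / 2 := by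
      rw [margin]
      simp only [speckerμ]
      rw [sum_ite_half]
    have h2 : margin (speckerμ c)
        (fun x (q : {q : Fin 3 // speckerMea q c0 ∧ speckerMea q c}) => x ⟨q.1, q.2.2⟩) b
        = ((univ.filter fun (a : ∀ q : {q : Fin 3 // speckerMea q c}, Sign) =>
            (fun (q : {q : Fin 3 // speckerMea q c0 ∧ speckerMea q c}) => a ⟨q.1, q.2.2⟩) = b ∧
            ((a ⟨c, speckerMea_self c⟩ : ℤ) = -(a ⟨c + 1, speckerMea_succ c⟩ : ℤ))).card : ℝ) / 2 := by
      rw [margin]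
      simp only [speckerμ]
      rw [sum_ite_half]
    rw [h1, h2]
    have hcard : ∀ b' : (∀ q : {q : Fin 3 // speckerMea q c0 ∧ speckerMea q c}, Sign),
        (univ.filter fun (a : ∀ q : {q : Fin 3 // speckerMea q c0}, Sign) =>
            (fun (q : {q : Fin 3 // speckerMea q c0 ∧ speckerMea q c}) => a ⟨q.1, q.2.1⟩) = b' ∧
            ((a ⟨c0, speckerMea_self c0⟩ : ℤ) = -(a ⟨c0 + 1, speckerMea_succ c0⟩ : ℤ))).card
        = (univ.filter fun (a : ∀ q : {q : Fin 3 // speckerMea q c}, Sign) =>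
            (fun (q : {q : Fin 3 // speckerMea q c0 ∧ speckerMea q c}) => a ⟨q.1, q.2.2⟩) = b' ∧
            ((a ⟨c, speckerMea_self c⟩ : ℤ) = -(a ⟨c + 1, speckerMea_succ c⟩ : ℤ))).card := by
      fin_cases c0 <;> fin_cases c <;> decide
    rw [hcard b]
end

section
/- For strongly consistently connected systems, CbD-noncontextuality specializes to noncontextuality in the sense of reduced couplings: an s.c.c. system admits a multimaximally connected coupling if and only if there exists a probability measure S on Π_{q∈Q} V_q whose marginal on the coordinates {q : q ≺ c} equals μ_c for every context c. Moreover, in an s.c.c. system the maximal equality probability m(q,c,c') equals 1 for every content q and all contexts c, c' with q ≺ c and q ≺ c', so a coupling is multimaximally connected exactly when, almost surely, the (q,c)-coordinate equals the (q,c')-coordinate for all such q, c, c'. -/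
open Finset

/-- `γ` is a coupling of the system `(μ c)_{c ∈ C}`: a probability measure on the product
over all pairs `(q, c)` with `q ≺ c` of `V q`, whose marginal on the coordinates of each
context `c` equals `μ c`. -/
def IsCoupling {Q C : Type} [Fintype Q] [DecidableEq Q] [Fintype C] [DecidableEq C]
    (mea : Q → C → Bool) (V : Q → Type) [∀ q, Fintype (V q)] [∀ q, DecidableEq (V q)]
    (μ : ∀ c : C, (∀ q : {q : Q // mea q c}, V q.1) → ℝ)
    (γ : (∀ p : {p : Q × C // mea p.1 p.2}, V p.1.1) → ℝ) : Prop :=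
  IsDist γ ∧
  ∀ c : C, margin γ (fun x (q : {q : Q // mea q c}) => x ⟨(q.1, c), q.2⟩) = μ c

/-- `γ` is multimaximally connected: for every content `q` and contexts `c, c'` in which
`q` is measured, the `γ`-probability that the `(q, c)`-coordinate equals the
`(q, c')`-coordinate is the greatest diagonal probability over all couplings of the
`q`-marginal of `μ c` with the `q`-marginal of `μ c'`. -/
def IsMultimaximal {Q C : Type} [Fintype Q] [DecidableEq Q] [Fintype C] [DecidableEq C]
    (mea : Q → C → Bool) (V : Q → Type) [∀ q, Fintype (V q)] [∀ q, DecidableEq (V q)]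
    (μ : ∀ c : C, (∀ q : {q : Q // mea q c}, V q.1) → ℝ)
    (γ : (∀ p : {p : Q × C // mea p.1 p.2}, V p.1.1) → ℝ) : Prop :=
  ∀ (q : Q) (c c' : C) (h : mea q c) (h' : mea q c'),
    IsGreatest
      {r : ℝ | ∃ ν : V q × V q → ℝ, IsDist ν ∧
          margin ν Prod.fst = margin (μ c) (fun x => x ⟨q, h⟩) ∧
          margin ν Prod.snd = margin (μ c') (fun x => x ⟨q, h'⟩) ∧
          r = ∑ v : V q, ν (v, v)}
      (∑ x ∈ univ.filter
          (fun x : ∀ p : {p : Q × C // mea p.1 p.2}, V p.1.1 =>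
            x ⟨(q, c), h⟩ = x ⟨(q, c'), h'⟩), γ x)

/-- A system is CbD-noncontextual if it has a multimaximally connected coupling. -/
def CbDNoncontextual {Q C : Type} [Fintype Q] [DecidableEq Q] [Fintype C] [DecidableEq C]
    (mea : Q → C → Bool) (V : Q → Type) [∀ q, Fintype (V q)] [∀ q, DecidableEq (V q)]
    (μ : ∀ c : C, (∀ q : {q : Q // mea q c}, V q.1) → ℝ) : Prop :=
  ∃ γ, IsCoupling mea V μ γ ∧ IsMultimaximal mea V μ γ


lemma margin_isDist {α β : Type} [Fintype α] [Fintype β] [DecidableEq β] {d : α → ℝ}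
    (hd : IsDist d) (f : α → β) : IsDist (margin d f) := by
  refine ⟨fun b => Finset.sum_nonneg fun a _ => hd.1 a, ?_⟩
  rw [← hd.2]
  exact Finset.sum_fiberwise_of_maps_to (fun a _ => Finset.mem_univ (f a)) d

lemma margin_comp {α β δ : Type} [Fintype α] [Fintype β] [DecidableEq β] [DecidableEq δ]
    (d : α → ℝ) (f : α → β) (g : β → δ) :
    margin (margin d f) g = margin d (g ∘ f) := by
  funext c
  unfold margin
  rw [Finset.sum_fiberwise_eq_sum_filter]
  congr 1
  ext a
  simp

lemma margin_congr {α β : Type} [Fintype α] [DecidableEq β] {d : α → ℝ} {f g : α → β}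
    (h : ∀ a, d a ≠ 0 → f a = g a) : margin d f = margin d g := by
  funext b
  unfold margin
  rw [Finset.sum_filter, Finset.sum_filter]
  refine Finset.sum_congr rfl fun a _ => ?_
  by_cases hd : d a = 0
  · simp [hd]
  · rw [h a hd]

lemma sum_filter_eq_one_iff {α : Type} [Fintype α] {d : α → ℝ} (hd : IsDist d)
    (P : α → Prop) [DecidablePred P] :
    ∑ a ∈ univ.filter P, d a = 1 ↔ ∀ a, d a ≠ 0 → P a := by
  have hsplit : ∑ a ∈ univ.filter P, d a + ∑ a ∈ univ.filter (fun a => ¬ P a), d a = 1 := by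
    rw [Finset.sum_filter_add_sum_filter_not]; exact hd.2
  constructor
  · intro h1 a ha
    by_contra hPa
    have hzero : ∑ a ∈ univ.filter (fun a => ¬ P a), d a = 0 := by linarith
    exact ha ((Finset.sum_eq_zero_iff_of_nonneg (fun x _ => hd.1 x)).mp hzero a (by simp [hPa]))
  · intro h
    have : ∑ a ∈ univ.filter (fun a => ¬ P a), d a = 0 :=
      Finset.sum_eq_zero fun a ha => by
        by_contra hz; exact (Finset.mem_filter.mp ha).2 (h a hz)
    linarith

lemma diag_isGreatest {β : Type} [Fintype β] [DecidableEq β] {d : β → ℝ} (hd : IsDist d) :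
    IsGreatest {r : ℝ | ∃ ν : β × β → ℝ, IsDist ν ∧
        margin ν Prod.fst = d ∧ margin ν Prod.snd = d ∧
        r = ∑ v : β, ν (v, v)} 1 := by
  constructor
  · refine ⟨fun p => if p.1 = p.2 then d p.1 else 0, ⟨?_, ?_⟩, ?_, ?_, ?_⟩
    · intro p; dsimp only; split
      · exact hd.1 _
      · exact le_refl 0
    · rw [Fintype.sum_prod_type]
      simp [Finset.sum_ite_eq, hd.2]
    · funext v
      unfold margin
      rw [Finset.sum_filter, Fintype.sum_prod_type]
      simp [Finset.sum_ite_eq]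
    · funext v
      unfold margin
      rw [Finset.sum_filter, Fintype.sum_prod_type]
      simp [Finset.sum_ite_eq]
    · simp [hd.2]
  · rintro r ⟨ν, hν, -, -, rfl⟩
    calc ∑ v : β, ν (v, v) ≤ ∑ p : β × β, ν p := by
          rw [Fintype.sum_prod_type]
          refine Finset.sum_le_sum fun v _ => ?_
          exact Finset.single_le_sum (fun w _ => hν.1 (v, w)) (Finset.mem_univ v)
      _ = 1 := hν.2

/-- For strongly consistently connected systems, CbD-noncontextuality specializes to
noncontextuality in the sense of reduced couplings. For an s.c.c. system:
(1) there is a multimaximally connected coupling iff there is a probability measure `S`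
on `Π_{q ∈ Q} V q` whose marginal on the contents measured in each context `c` is `μ c`;
(2) the maximal equality probability `m(q, c, c')` equals `1` for every content `q` and
all contexts `c, c'` measuring `q`; and
(3) a coupling is multimaximally connected exactly when, almost surely, its
`(q, c)`-coordinate equals its `(q, c')`-coordinate for all such `q, c, c'`. -/
theorem scc_cbd_specializes_to_reduced_coupling
    {Q C : Type} [Fintype Q] [DecidableEq Q] [Fintype C] [DecidableEq C]
    (mea : Q → C → Bool) (V : Q → Type) [∀ q, Fintype (V q)] [∀ q, DecidableEq (V q)]
    [∀ q, Nonempty (V q)]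
    (μ : ∀ c : C, (∀ q : {q : Q // mea q c}, V q.1) → ℝ)
    (hdist : ∀ c, IsDist (μ c))
    (hscc : ∀ (Q' : Finset Q) (c c' : C)
        (h : ∀ q ∈ Q', mea q c) (h' : ∀ q ∈ Q', mea q c'),
        margin (μ c) (fun x (q : {q : Q // q ∈ Q'}) => x ⟨q.1, h q.1 q.2⟩)
          = margin (μ c') (fun x (q : {q : Q // q ∈ Q'}) => x ⟨q.1, h' q.1 q.2⟩)) :
    (CbDNoncontextual mea V μ ↔
      ∃ S : (∀ q : Q, V q) → ℝ, IsDist S ∧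
        ∀ c : C, margin S (fun x (q : {q : Q // mea q c}) => x q.1) = μ c)
    ∧ (∀ (q : Q) (c c' : C) (h : mea q c) (h' : mea q c'),
        IsGreatest
          {r : ℝ | ∃ ν : V q × V q → ℝ, IsDist ν ∧
              margin ν Prod.fst = margin (μ c) (fun x => x ⟨q, h⟩) ∧
              margin ν Prod.snd = margin (μ c') (fun x => x ⟨q, h'⟩) ∧
              r = ∑ v : V q, ν (v, v)} 1)
    ∧ (∀ γ, IsCoupling mea V μ γ →
        (IsMultimaximal mea V μ γ ↔
          ∀ x, γ x ≠ 0 → ∀ (q : Q) (c c' : C) (h : mea q c) (h' : mea q c'),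
            x ⟨(q, c), h⟩ = x ⟨(q, c'), h'⟩)) := by
  -- single-content marginal equality
  have hsingle : ∀ (q : Q) (c c' : C) (h : mea q c) (h' : mea q c'),
      margin (μ c) (fun x => x ⟨q, h⟩) = margin (μ c') (fun x => x ⟨q, h'⟩) := by
    intro q c c' h h'
    have h1 : ∀ q' ∈ ({q} : Finset Q), mea q' c = true := by
      intro q' hq'; rw [Finset.mem_singleton] at hq'; subst hq'; exact h
    have h1' : ∀ q' ∈ ({q} : Finset Q), mea q' c' = true := by
      intro q' hq'; rw [Finset.mem_singleton] at hq'; subst hq'; exact h'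
    have hmem : q ∈ ({q} : Finset Q) := Finset.mem_singleton_self q
    have key := hscc {q} c c' h1 h1'
    have e1 : margin (μ c) (fun x => x ⟨q, h⟩)
        = margin (margin (μ c) (fun x (q' : {q' : Q // q' ∈ ({q} : Finset Q)}) =>
            x ⟨q'.1, h1 q'.1 q'.2⟩))
          (fun y => y ⟨q, hmem⟩) := by
      rw [margin_comp]; rfl
    have e2 : margin (μ c') (fun x => x ⟨q, h'⟩)
        = margin (margin (μ c') (fun x (q' : {q' : Q // q' ∈ ({q} : Finset Q)}) =>
            x ⟨q'.1, h1' q'.1 q'.2⟩))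
          (fun y => y ⟨q, hmem⟩) := by
      rw [margin_comp]; rfl
    rw [e1, e2, key]
  -- part (2)
  have part2 : ∀ (q : Q) (c c' : C) (h : mea q c) (h' : mea q c'),
      IsGreatest
        {r : ℝ | ∃ ν : V q × V q → ℝ, IsDist ν ∧
            margin ν Prod.fst = margin (μ c) (fun x => x ⟨q, h⟩) ∧
            margin ν Prod.snd = margin (μ c') (fun x => x ⟨q, h'⟩) ∧
            r = ∑ v : V q, ν (v, v)} 1 := by
    intro q c c' h h'
    rw [← hsingle q c c' h h']
    exact diag_isGreatest (margin_isDist (hdist c) _)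
  -- part (3)
  have part3 : ∀ γ, IsCoupling mea V μ γ →
      (IsMultimaximal mea V μ γ ↔
        ∀ x, γ x ≠ 0 → ∀ (q : Q) (c c' : C) (h : mea q c) (h' : mea q c'),
          x ⟨(q, c), h⟩ = x ⟨(q, c'), h'⟩) := by
    intro γ hγ
    constructor
    · intro hm x hx q c c' h h'
      have heq : (∑ x ∈ univ.filter
          (fun x : ∀ p : {p : Q × C // mea p.1 p.2}, V p.1.1 =>
            x ⟨(q, c), h⟩ = x ⟨(q, c'), h'⟩), γ x) = 1 :=
        (hm q c c' h h').unique (part2 q c c' h h')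
      exact (sum_filter_eq_one_iff hγ.1 _).mp heq x hx
    · intro hs q c c' h h'
      have heq : (∑ x ∈ univ.filter
          (fun x : ∀ p : {p : Q × C // mea p.1 p.2}, V p.1.1 =>
            x ⟨(q, c), h⟩ = x ⟨(q, c'), h'⟩), γ x) = 1 :=
        (sum_filter_eq_one_iff hγ.1 _).mpr (fun x hx => hs x hx q c c' h h')
      rw [heq]
      exact part2 q c c' h h'
  refine ⟨?_, part2, part3⟩
  constructor
  · rintro ⟨γ, hγc, hγm⟩
    have hsupp := (part3 γ hγc).mp hγm
    let F : (∀ p : {p : Q × C // mea p.1 p.2}, V p.1.1) → (∀ q, V q) :=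
      fun x q => if hq : ∃ c, mea q c = true then x ⟨(q, hq.choose), hq.choose_spec⟩
        else Classical.arbitrary _
    refine ⟨margin γ F, margin_isDist hγc.1 F, fun c => ?_⟩
    rw [margin_comp]
    have hcongr : margin γ ((fun x (q : {q : Q // mea q c}) => x q.1) ∘ F)
        = margin γ (fun x (q : {q : Q // mea q c}) => x ⟨(q.1, c), q.2⟩) := by
      apply margin_congr
      intro x hx
      funext q
      have hq : ∃ c₀, mea q.1 c₀ = true := ⟨c, q.2⟩
      show F x q.1 = x ⟨(q.1, c), q.2⟩
      simp only [F, dif_pos hq]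
      exact hsupp x hx q.1 hq.choose c hq.choose_spec q.2
    rw [hcongr]
    exact hγc.2 c
  · rintro ⟨S, hS, hSm⟩
    let G : (∀ q, V q) → (∀ p : {p : Q × C // mea p.1 p.2}, V p.1.1) :=
      fun y p => y p.1.1
    have hcoup : IsCoupling mea V μ (margin S G) := by
      refine ⟨margin_isDist hS G, fun c => ?_⟩
      rw [margin_comp]
      exact hSm c
    refine ⟨margin S G, hcoup, (part3 _ hcoup).mpr ?_⟩
    intro x hx q c c' h h'
    have hne : (univ.filter (fun y : ∀ q, V q => G y = x)).Nonempty := by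
      by_contra hempty
      rw [Finset.not_nonempty_iff_eq_empty] at hempty
      exact hx (by simp [margin, hempty])
    obtain ⟨y, hy⟩ := hne
    have hGy : G y = x := (Finset.mem_filter.mp hy).2
    rw [← hGy]
end
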